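/- Let s = (s₁,s₂,s₃) ∈ ℝ³ with s₁,s₂,s₃ > 0, and suppose p_r(s) ≥ 0 for all r = 1,2,3. Then the symmetric matrix M₂₄(s, a⁰(s)) is positive semidefinite. -/

import Mathlib

open Matrix

/-- `S(s) = 2(s₁s₂+s₁s₃+s₂s₃) - (s₁²+s₂²+s₃²)`. -/
noncomputable def Spoly (s : Fin 3 → ℝ) : ℝ :=
  2 * (s 0 * s 1 + s 0 * s 2 + s 1 * s 2) - (s 0 ^ 2 + s 1 ^ 2 + s 2 ^ 2)

/-- `p_r(s) = (s_{r+1}-s_{r+2})² + 2 s_r (s_{r+1}+s_{r+2}) - 3 s_r²`, indices mod 3. -/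
noncomputable def ppoly (s : Fin 3 → ℝ) (r : Fin 3) : ℝ :=
  (s (r + 1) - s (r + 2)) ^ 2 + 2 * s r * (s (r + 1) + s (r + 2)) - 3 * s r ^ 2

/-- `a_r⁰(s) = ((s_{r+1}-s_{r+2})² - s_r²)/(2 s_r)`, indices mod 3. -/
noncomputable def a0 (s : Fin 3 → ℝ) (r : Fin 3) : ℝ :=
  ((s (r + 1) - s (r + 2)) ^ 2 - s r ^ 2) / (2 * s r)

/-- First block of the modified curvature operator of `(W²⁴, g_s)`. -/
noncomputable def M24 (s a : Fin 3 → ℝ) : Matrix (Fin 3) (Fin 3) ℝ :=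
  !![4 * s 0,                   Spoly s / s 2 - 2 * a 2,  Spoly s / s 1 - 2 * a 1;
     Spoly s / s 2 - 2 * a 2,   4 * s 1,                  Spoly s / s 0 - 2 * a 0;
     Spoly s / s 1 - 2 * a 1,   Spoly s / s 0 - 2 * a 0,  4 * s 2]

/-- If `p_r(s) ≥ 0` for all `r`, then `M₂₄(s, a⁰(s))` is positive semidefinite. -/
theorem M24_posSemidef (s : Fin 3 → ℝ) (hs : ∀ r, 0 < s r)
    (hp : ∀ r, 0 ≤ ppoly s r) : (M24 s (a0 s)).PosSemidef := by
  have ha := hs 0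
  have hb := hs 1
  have hc := hs 2
  set a := s 0 with ha'
  set b := s 1 with hb'
  set c := s 2 with hc'
  have hS : 0 ≤ 2 * (a * b + a * c + b * c) - (a ^ 2 + b ^ 2 + c ^ 2) := by
    have h0 := hp 0
    have h1 := hp 1
    have h2 := hp 2
    simp only [ppoly, show ((0:Fin 3)+1 = 1) from rfl, show ((0:Fin 3)+2 = 2) from rfl,
      show ((1:Fin 3)+1 = 2) from rfl, show ((1:Fin 3)+2 = 0) from rfl,
      show ((2:Fin 3)+1 = 0) from rfl, show ((2:Fin 3)+2 = 1) from rfl] at h0 h1 h2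
    nlinarith [h0, h1, h2]
  rw [Matrix.posSemidef_iff_dotProduct_mulVec]
  constructor
  · unfold Matrix.IsHermitian
    ext i j
    fin_cases i <;> fin_cases j <;>
      simp [M24, Matrix.conjTranspose_apply]
  · intro x
    have key : ∀ u v w : ℝ,
        0 ≤ u * (4 * a * u + (Spoly s / c - 2 * a0 s 2) * v + (Spoly s / b - 2 * a0 s 1) * w)
          + v * ((Spoly s / c - 2 * a0 s 2) * u + 4 * b * v + (Spoly s / a - 2 * a0 s 0) * w)
          + w * ((Spoly s / b - 2 * a0 s 1) * u + (Spoly s / a - 2 * a0 s 0) * v + 4 * c * w) := by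
      intro u v w
      have hEq : u * (4 * a * u + (Spoly s / c - 2 * a0 s 2) * v + (Spoly s / b - 2 * a0 s 1) * w)
          + v * ((Spoly s / c - 2 * a0 s 2) * u + 4 * b * v + (Spoly s / a - 2 * a0 s 0) * w)
          + w * ((Spoly s / b - 2 * a0 s 1) * u + (Spoly s / a - 2 * a0 s 0) * v + 4 * c * w)
          = ((2 * (a ^ 2 * u + b ^ 2 * v + c ^ 2 * w)
                - (a + b + c) * (a * u + b * v + c * w)) ^ 2
              + (2 * (a * b + a * c + b * c) - (a ^ 2 + b ^ 2 + c ^ 2))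
                  * (a * u + b * v + c * w) ^ 2) / (a * b * c) := by
        simp only [Spoly, a0]
        have h1 : ((1 : Fin 3) + 1) = (2 : Fin 3) := by decide
        have h2 : ((1 : Fin 3) + 2) = (0 : Fin 3) := by decide
        have h3 : ((2 : Fin 3) + 1) = (0 : Fin 3) := by decide
        have h4 : ((2 : Fin 3) + 2) = (1 : Fin 3) := by decide
        have h5 : ((0 : Fin 3) + 1) = (1 : Fin 3) := by decide
        have h6 : ((0 : Fin 3) + 2) = (2 : Fin 3) := by decide
        rw [h1, h2, h3, h4, h5, h6, ← ha', ← hb', ← hc']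
        field_simp
        ring
      rw [hEq]
      apply div_nonneg
      · exact add_nonneg (sq_nonneg _) (mul_nonneg hS (sq_nonneg _))
      · positivity
    have hx : (star x ⬝ᵥ (M24 s (a0 s)) *ᵥ x)
        = x 0 * (4 * a * x 0 + (Spoly s / c - 2 * a0 s 2) * x 1 + (Spoly s / b - 2 * a0 s 1) * x 2)
          + x 1 * ((Spoly s / c - 2 * a0 s 2) * x 0 + 4 * b * x 1 + (Spoly s / a - 2 * a0 s 0) * x 2)
          + x 2 * ((Spoly s / b - 2 * a0 s 1) * x 0 + (Spoly s / a - 2 * a0 s 0) * x 1 + 4 * c * x 2) := by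
      simp [M24, dotProduct, Matrix.mulVec, Fin.sum_univ_three, ← ha', ← hb', ← hc']
      try ring
    rw [hx]
    exact key (x 0) (x 1) (x 2)
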